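/- arXiv:1402.6318 — 3 statements merged into one kernel-verified Lean document; each statement's English description precedes it below -/
import Mathlib

section
/- With the setup of the previous statement, conversely: if the limit of (gᵢ - 1)/nᵢ is +∞, then the series ∑_{j=1}^{∞} dⱼ/nⱼ diverges. -/
open Filter

/-- Conversely, if the genus of the tower is infinite, the normalized different series diverges. -/
theorem stmt_2 (g₀ : ℝ) (g n d : ℕ → ℝ)
    (hn0 : n 0 = 1) (hnpos : ∀ i, 0 < n i) (hnmono : ∀ i, n i ≤ n (i + 1))
    (hd : ∀ j, 0 ≤ d j)
    (heq : ∀ i, (g i - 1) / n i = (g₀ - 1) + (1 / 2) * ∑ j ∈ Finset.Icc 1 i, d j / n j)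
    (hlim : Tendsto (fun i => (g i - 1) / n i) atTop atTop) :
    Tendsto (fun i => ∑ j ∈ Finset.Icc 1 i, d j / n j) atTop atTop := by
  have key : (fun i => ∑ j ∈ Finset.Icc 1 i, d j / n j)
      = fun i => 2 * ((g i - 1) / n i - (g₀ - 1)) := by
    funext i
    have := heq i
    linarith
  rw [key]
  exact ((hlim.atTop_add tendsto_const_nhds).const_mul_atTop (by norm_num : (0:ℝ) < 2))
end

section
/- Let p be a prime and let v : it be a discrete valuation on a field F of characteristic p (v : F → ℤ ∪ {∞}, surjective onto ℤ on F^×). Let z ∈ F be such that v(z) < 0 and gcd(v(z), p) = 1. Then for every u ∈ F, v(z - (u^p - u)) ≤ v(z) < 0. In particular v(z - (u^p - u)) ≠ 0 for all u. -/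
/-- Key valuation step for Artin–Schreier towers: if `v z < 0` and `gcd(v z, p) = 1`,
then `v (z - (u^p - u)) ≤ v z < 0` for every `u`. -/
theorem stmt_5 (p : ℕ) (hp : p.Prime) (F : Type*) [Field F] [CharP F p]
    (v : AddValuation F (WithTop ℤ))
    (hsurj : ∀ n : ℤ, ∃ x : F, x ≠ 0 ∧ v x = (n : WithTop ℤ))
    (z : F) (m : ℤ) (hz : v z = (m : WithTop ℤ)) (hm : m < 0) (hgcd : Int.gcd m p = 1) :
    ∀ u : F, v (z - (u ^ p - u)) ≤ v z ∧ v z < 0 ∧ v (z - (u ^ p - u)) ≠ 0 := by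
  intro u
  have hzneg : v z < 0 := by rw [hz]; exact_mod_cast hm
  have hne : v z ≠ v (u ^ p - u) := by
    rcases lt_or_ge (v u) 0 with hu | hu
    · -- v u < 0 : v(u^p - u) = p • v u, divisible by p
      have hut : v u ≠ ⊤ := by intro h; rw [h] at hu; exact (not_top_lt hu)
      obtain ⟨k, hk⟩ := WithTop.ne_top_iff_exists.mp hut
      have hk' : v u = (k : WithTop ℤ) := hk.symm
      have hkneg : k < 0 := by rw [hk'] at hu; exact_mod_cast hu
      have hpow : v (u ^ p) = ((p * k : ℤ) : WithTop ℤ) := by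
        rw [v.map_pow, hk']
        norm_cast
      have hlt : v (u ^ p) < v u := by
        rw [hpow, hk']
        have : (p : ℤ) * k < k := by
          have hp2 : (2 : ℤ) ≤ p := by exact_mod_cast hp.two_le
          nlinarith
        exact_mod_cast this
      have hw : v (u ^ p - u) = ((p * k : ℤ) : WithTop ℤ) := by
        rw [v.map_sub_eq_of_lt_left hlt, hpow]
      rw [hz, hw]
      intro h
      have hmk : m = (p : ℤ) * k := by exact_mod_cast h
      have hpdvd : (p : ℤ) ∣ m := ⟨k, hmk⟩
      have : (p : ℕ) ∣ Int.gcd m p := Nat.dvd_gcd (Int.natAbs_dvd_natAbs.mpr hpdvd) dvd_rfl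
      rw [hgcd] at this
      exact hp.one_lt.ne' (Nat.le_antisymm  (Nat.le_of_dvd one_pos this) hp.one_lt.le)
    · -- v u ≥ 0 : v(u^p - u) ≥ 0 > v z
      have h1 : (0 : WithTop ℤ) ≤ v (u ^ p) := by
        rw [v.map_pow]
        exact nsmul_nonneg hu p
      have h2 : (0 : WithTop ℤ) ≤ v (u ^ p - u) := v.map_le_sub h1 hu
      exact ne_of_lt (lt_of_lt_of_le hzneg h2)
  have hle : v (z - (u ^ p - u)) ≤ v z := by
    rw [sub_eq_add_neg, v.map_add_of_distinct_val (by rwa [v.map_neg]), v.map_neg]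
    exact min_le_left _ _
  exact ⟨hle, hzneg, ne_of_lt (lt_of_le_of_lt hle hzneg)⟩
end

section
/- In the setting of Example 4.1 (basic function field K(x,y) with y^{p+1} + y = x^{p+1}/f(x), deg f = p+1−r, gcd(r, p+1) = 1, f(0) ≠ 0, [K(x,y):K(x)] = p+1): if Q' is a zero of y^p + 1 in K(x,y) lying over P_x (the zero of x in K(x)), and v_{P_x}(f(x)) = 0, then p · v_{Q'}(y + 1) = (p+1) · e(Q'|P_x), and consequently e(Q'|P_x) = p. -/
/-- Example 4.1: a zero `Q'` of `y^p + 1` over `P_x` satisfies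
`p · v_{Q'}(y+1) = (p+1) · e(Q'|P_x)` and hence `e(Q'|P_x) = p`. -/
theorem stmt_11 {K L : Type*} [Field K] [Field L] [Algebra K L]
    (p : ℕ) (hp : p.Prime) [CharP L p]
    (x y : L) (f : Polynomial K)
    (e : ℕ) (he1 : 1 ≤ e) (hele : e ≤ p + 1)   -- e ≤ [K(x,y):K(x)] = p+1
    (heq : y ^ (p + 1) + y = x ^ (p + 1) / Polynomial.aeval x f)
    (w : AddValuation L (WithTop ℤ))
    (hwf : w (Polynomial.aeval x f) = 0)       -- v_{P_x}(f(x)) = 0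
    (hwx : w x = ((e : ℤ) : WithTop ℤ))        -- w(x) = e(Q'|P_x)·v_{P_x}(x) = e
    (hQ' : 0 < w (y ^ p + 1)) :                -- Q' is a zero of y^p + 1
    p • w (y + 1) = ((((p + 1) * e : ℕ) : ℤ) : WithTop ℤ) ∧ e = p := by
  haveI := Fact.mk hp
  -- Frobenius: y^p + 1 = (y+1)^p
  have hfrob : y ^ p + 1 = (y + 1) ^ p := by
    have h := add_pow_char (R := L) (x := y) (y := (1 : L)) (p := p)
    rw [one_pow] at h
    exact h.symm
  rw [hfrob, w.map_pow] at hQ'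
  -- w(y+1) > 0
  have hpos : 0 < w (y + 1) := by
    by_contra h
    push_neg at h
    have : p • w (y + 1) ≤ 0 := nsmul_nonpos h p
    exact absurd hQ' (not_lt.mpr this)
  -- w(y) = 0
  have hwy : w y = 0 := by
    have h1 : w (-1 : L) = 0 := by rw [w.map_neg, w.map_one]
    have : w ((y + 1) + (-1)) = w (-1 : L) :=
      w.map_add_eq_of_lt_right (by rw [h1]; exact hpos)
    simpa [h1] using this
  -- the key valuation identity
  have key : p • w (y + 1) = ((((p + 1) * e : ℕ) : ℤ) : WithTop ℤ) := by
    have hlhs : w (y ^ (p + 1) + y) = p • w (y + 1) := by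
      have : y ^ (p + 1) + y = y * (y ^ p + 1) := by ring
      rw [this, w.map_mul, hwy, hfrob, w.map_pow, zero_add]
    have hrhs : w (x ^ (p + 1) / Polynomial.aeval x f)
        = ((((p + 1) * e : ℕ) : ℤ) : WithTop ℤ) := by
      rw [w.map_div, w.map_pow, hwx, hwf, sub_zero, ← WithTop.coe_nsmul]
      norm_cast
    rw [← hlhs, heq, hrhs]
  refine ⟨key, ?_⟩
  -- extract a finite value a with p * a = (p+1) * e
  obtain ⟨a, ha⟩ : ∃ a : ℤ, w (y + 1) = (a : WithTop ℤ) := by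
    cases hwy1 : w (y + 1) with
    | top =>
      rw [hwy1] at key
      have : p • (⊤ : WithTop ℤ) = ⊤ := by
        have hp0 : p ≠ 0 := hp.ne_zero
        cases p with
        | zero => exact absurd rfl hp0
        | succ n => rw [succ_nsmul]; simp
      rw [this] at key
      exact absurd key.symm (WithTop.coe_ne_top)
    | coe a => exact ⟨a, rfl⟩
  rw [ha, ← WithTop.coe_nsmul] at key
  have hkey : p • a = (((p + 1) * e : ℕ) : ℤ) := by exact_mod_cast key
  have hdvd : (p : ℤ) ∣ ((p + 1) * e : ℕ) := ⟨a, by rw [← hkey]; simp [mul_comm]⟩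
  have hdvdn : p ∣ (p + 1) * e := by exact_mod_cast hdvd
  have hcop : Nat.Coprime p (p + 1) := by simp
  have hpe : p ∣ e := (Nat.Coprime.dvd_of_dvd_mul_left hcop) hdvdn
  -- p ∣ e, 1 ≤ e ≤ p+1 forces e = p
  have hpe' : p ≤ e := Nat.le_of_dvd he1 hpe
  have hcase : e = p ∨ e = p + 1 := by omega
  rcases hcase with h | h
  · exact h
  · exfalso
    rw [h] at hpe
    have : p ∣ 1 := (Nat.dvd_add_right (dvd_refl p)).mp hpe
    exact Nat.Prime.one_lt hp |>.ne' (Nat.dvd_one.mp this)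
end
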